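/- arXiv:1307.0357 — 3 statements merged into one kernel-verified Lean document; each statement's English description precedes it below -/
import Mathlib

section
/- (Gauss) For all n ≥ 0: Σ_{k=0}^{2n} (-1)^k [2n choose k]_q = (1-q)(1-q^3)···(1-q^{2n-1}), and Σ_{k=0}^{2n+1} (-1)^k [2n+1 choose k]_q = 0. -/
open Finset

/-- The q-analogue `[n]_q = (1-q^n)/(1-q)`. -/
noncomputable def qNum {F : Type*} [Field F] (q : F) (n : ℕ) : F := (1 - q ^ n) / (1 - q)

/-- The q-factorial `[n]_q! = [1]_q [2]_q ⋯ [n]_q`. -/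
noncomputable def qFact {F : Type*} [Field F] (q : F) (n : ℕ) : F :=
  ∏ j ∈ Finset.Icc 1 n, qNum q j

/-- The q-binomial (Gaussian) coefficient `[n choose k]_q = [n]_q!/([k]_q! [n-k]_q!)`,
zero when `k > n`. -/
noncomputable def qBinom {F : Type*} [Field F] (q : F) (n k : ℕ) : F :=
  if k ≤ n then qFact q n / (qFact q k * qFact q (n - k)) else 0

/-- Auxiliary: the alternating sum `Σ_{k=0}^m (-1)^k [m choose k]_q`. -/
noncomputable def Sg {F : Type*} [Field F] (q : F) (m : ℕ) : F :=
  ∑ k ∈ Finset.range (m + 1), (-1 : F) ^ k * qBinom q m k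

/-- Auxiliary: the weighted alternating sum `Σ_{k=0}^m (-1)^k q^k [m choose k]_q`. -/
noncomputable def Tg {F : Type*} [Field F] (q : F) (m : ℕ) : F :=
  ∑ k ∈ Finset.range (m + 1), (-1 : F) ^ k * (q ^ k * qBinom q m k)

section Aux
variable {F : Type*} [Field F] (q : F)

lemma qFact_zero : qFact q 0 = 1 := by simp [qFact]

lemma qFact_succ (m : ℕ) : qFact q (m + 1) = qFact q m * qNum q (m + 1) := by
  rw [qFact, qFact, Finset.prod_Icc_succ_top (by omega)]

lemma qBinom_gt {n k : ℕ} (h : n < k) : qBinom q n k = 0 := if_neg (by omega)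

variable (hq : ∀ j : ℕ, 1 ≤ j → q ^ j ≠ 1)
include hq

lemma one_sub_q_ne : (1 : F) - q ≠ 0 := by
  have h := hq 1 le_rfl
  rw [pow_one] at h
  exact sub_ne_zero.mpr (Ne.symm h)

lemma one_sub_pow_ne (j : ℕ) (hj : 1 ≤ j) : (1 : F) - q ^ j ≠ 0 :=
  sub_ne_zero.mpr (Ne.symm (hq j hj))

lemma qNum_ne (j : ℕ) (hj : 1 ≤ j) : qNum q j ≠ 0 := by
  rw [qNum]
  exact div_ne_zero (one_sub_pow_ne q hq j hj) (one_sub_q_ne q hq)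

lemma qFact_ne (m : ℕ) : qFact q m ≠ 0 := by
  induction m with
  | zero => simp [qFact_zero]
  | succ m ih => rw [qFact_succ]; exact mul_ne_zero ih (qNum_ne q hq _ (by omega))

lemma qBinom_zero (n : ℕ) : qBinom q n 0 = 1 := by
  rw [qBinom, if_pos (Nat.zero_le n)]
  simp [qFact_zero, div_self (qFact_ne q hq n)]

lemma qBinom_self (n : ℕ) : qBinom q n n = 1 := by
  rw [qBinom, if_pos le_rfl, Nat.sub_self]
  simp [qFact_zero, div_self (qFact_ne q hq n)]

lemma pascal_core (k b : ℕ) :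
    qBinom q (k + b + 2) (k + 1) =
      q ^ (k + 1) * qBinom q (k + b + 1) (k + 1) + qBinom q (k + b + 1) k := by
  rw [qBinom, qBinom, qBinom, if_pos (by omega), if_pos (by omega), if_pos (by omega)]
  have e1 : k + b + 2 - (k + 1) = b + 1 := by omega
  have e2 : k + b + 1 - (k + 1) = b := by omega
  have e3 : k + b + 1 - k = b + 1 := by omega
  rw [e1, e2, e3]
  have f1 : qFact q (k + b + 2) = qFact q (k + b + 1) * qNum q (k + b + 2) := qFact_succ q _
  have f2 : qFact q (k + 1) = qFact q k * qNum q (k + 1) := qFact_succ q _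
  have f3 : qFact q (b + 1) = qFact q b * qNum q (b + 1) := qFact_succ q _
  rw [f1, f2, f3]
  simp only [qNum]
  have h0 : (1 : F) - q ≠ 0 := one_sub_q_ne q hq
  have h1 : (1 : F) - q ^ (k + 1) ≠ 0 := one_sub_pow_ne q hq _ (by omega)
  have h2 : (1 : F) - q ^ (b + 1) ≠ 0 := one_sub_pow_ne q hq _ (by omega)
  have h3 : qFact q k ≠ 0 := qFact_ne q hq k
  have h4 : qFact q b ≠ 0 := qFact_ne q hq b
  have h5 : qFact q (k + b + 1) ≠ 0 := qFact_ne q hq _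
  field_simp
  ring

lemma qBinom_pascal {k m : ℕ} (hk : k ≤ m) :
    qBinom q (m + 1) (k + 1) =
      q ^ (k + 1) * qBinom q m (k + 1) + qBinom q m k := by
  rcases Nat.lt_or_ge k m with hlt | hge
  · obtain ⟨b, rfl⟩ := Nat.exists_eq_add_of_lt hlt
    exact pascal_core q hq k b
  · have : k = m := le_antisymm hk hge
    subst this
    rw [qBinom_self q hq, qBinom_self q hq, qBinom_gt q (by omega)]
    ring

lemma absorb_core (k b : ℕ) :
    (1 - q ^ (k + 1)) * qBinom q (k + b + 1) (k + 1) =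
      (1 - q ^ (k + b + 1)) * qBinom q (k + b) k := by
  rw [qBinom, qBinom, if_pos (by omega), if_pos (by omega)]
  have e1 : k + b + 1 - (k + 1) = b := by omega
  have e2 : k + b - k = b := by omega
  rw [e1, e2]
  have f1 : qFact q (k + b + 1) = qFact q (k + b) * qNum q (k + b + 1) := qFact_succ q _
  have f2 : qFact q (k + 1) = qFact q k * qNum q (k + 1) := qFact_succ q _
  rw [f1, f2]
  simp only [qNum]
  have h0 : (1 : F) - q ≠ 0 := one_sub_q_ne q hq
  have h1 : (1 : F) - q ^ (k + 1) ≠ 0 := one_sub_pow_ne q hq _ (by omega)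
  have h3 : qFact q k ≠ 0 := qFact_ne q hq k
  have h4 : qFact q b ≠ 0 := qFact_ne q hq b
  have h5 : qFact q (k + b) ≠ 0 := qFact_ne q hq _
  field_simp

lemma qBinom_absorb {k m : ℕ} (hk : k ≤ m) :
    (1 - q ^ (k + 1)) * qBinom q (m + 1) (k + 1) =
      (1 - q ^ (m + 1)) * qBinom q m k := by
  obtain ⟨b, rfl⟩ := Nat.exists_eq_add_of_le hk
  exact absorb_core q hq k b

lemma step1 (m : ℕ) : Sg q (m + 1) + Sg q m = Tg q m := by
  have h1 : Sg q (m + 1) =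
      (∑ j ∈ Finset.range (m + 1),
        ((-1 : F) ^ (j + 1) * (q ^ (j + 1) * qBinom q m (j + 1)) +
          (-1 : F) ^ (j + 1) * qBinom q m j)) + 1 := by
    rw [Sg, Finset.sum_range_succ']
    congr 1
    · refine Finset.sum_congr rfl fun j hj => ?_
      rw [qBinom_pascal q hq (Nat.lt_succ_iff.mp (Finset.mem_range.mp hj))]
      ring
    · simp [qBinom_zero q hq]
  have hA : ∑ j ∈ Finset.range (m + 1),
      (-1 : F) ^ (j + 1) * (q ^ (j + 1) * qBinom q m (j + 1)) = Tg q m - 1 := by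
    rw [Finset.sum_range_succ, qBinom_gt q (by omega : m < m + 1), Tg,
      Finset.sum_range_succ']
    simp [qBinom_zero q hq]
  have hB : ∑ j ∈ Finset.range (m + 1),
      (-1 : F) ^ (j + 1) * qBinom q m j = -Sg q m := by
    rw [Sg, ← Finset.sum_neg_distrib]
    exact Finset.sum_congr rfl fun j _ => by ring
  rw [h1, Finset.sum_add_distrib, hA, hB]
  ring

lemma step2 (m : ℕ) : Tg q (m + 1) = Sg q (m + 1) + (1 - q ^ (m + 1)) * Sg q m := by
  have h : Tg q (m + 1) - Sg q (m + 1) = (1 - q ^ (m + 1)) * Sg q m := by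
    rw [Tg, Sg, ← Finset.sum_sub_distrib, Finset.sum_range_succ']
    have h0 : ((-1 : F) ^ 0 * (q ^ 0 * qBinom q (m + 1) 0) -
        (-1 : F) ^ 0 * qBinom q (m + 1) 0) = 0 := by simp
    rw [h0, add_zero]
    have hterm : ∀ j ∈ Finset.range (m + 1),
        ((-1 : F) ^ (j + 1) * (q ^ (j + 1) * qBinom q (m + 1) (j + 1)) -
          (-1 : F) ^ (j + 1) * qBinom q (m + 1) (j + 1)) =
        (-1 : F) ^ j * ((1 - q ^ (m + 1)) * qBinom q m j) := by
      intro j hj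
      have hjm : j ≤ m := Nat.lt_succ_iff.mp (Finset.mem_range.mp hj)
      linear_combination (-1 : F) ^ j * qBinom_absorb q hq hjm
    rw [Finset.sum_congr rfl hterm, Sg, Finset.mul_sum]
    exact Finset.sum_congr rfl fun j _ => by ring
  linear_combination h

lemma keyrec (m : ℕ) : Sg q (m + 2) = (1 - q ^ (m + 1)) * Sg q m := by
  have h1 := step1 q hq (m + 1)
  have h2 := step2 q hq m
  linear_combination h1 + h2

lemma Sg_zero : Sg q 0 = 1 := by
  simp [Sg, qBinom_zero q hq]

lemma Sg_one : Sg q 1 = 0 := by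
  rw [Sg]
  rw [show (1 : ℕ) + 1 = 2 from rfl, Finset.sum_range_succ, Finset.sum_range_one,
    qBinom_zero q hq, qBinom_self q hq]
  ring

lemma Sg_main (n : ℕ) :
    Sg q (2 * n) = ∏ j ∈ Finset.range n, (1 - q ^ (2 * j + 1)) ∧ Sg q (2 * n + 1) = 0 := by
  induction n with
  | zero =>
    simp [Sg_zero q hq, Sg_one q hq]
  | succ n ih =>
    constructor
    · have h : Sg q (2 * n + 2) = (1 - q ^ (2 * n + 1)) * Sg q (2 * n) := keyrec q hq (2 * n)
      have e : 2 * (n + 1) = 2 * n + 2 := by ring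
      rw [e, h, ih.1, Finset.prod_range_succ]
      ring
    · have h : Sg q (2 * n + 1 + 2) = (1 - q ^ (2 * n + 2)) * Sg q (2 * n + 1) :=
        keyrec q hq (2 * n + 1)
      have e : 2 * (n + 1) + 1 = 2 * n + 1 + 2 := by ring
      rw [e, h, ih.2, mul_zero]

end Aux

/-- Gauss: `Σ_{k=0}^{2n} (-1)^k [2n choose k]_q = (1-q)(1-q^3)⋯(1-q^{2n-1})` and
`Σ_{k=0}^{2n+1} (-1)^k [2n+1 choose k]_q = 0`. -/
theorem gauss_alternating_sum {F : Type*} [Field F] (q : F)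
    (hq : ∀ j : ℕ, 1 ≤ j → q ^ j ≠ 1) (n : ℕ) :
    (∑ k ∈ Finset.range (2 * n + 1), (-1 : F) ^ k * qBinom q (2 * n) k =
      ∏ j ∈ Finset.range n, (1 - q ^ (2 * j + 1))) ∧
    (∑ k ∈ Finset.range (2 * n + 2), (-1 : F) ^ k * qBinom q (2 * n + 1) k = 0) := by
  have h := Sg_main q hq n
  exact ⟨h.1, h.2⟩
end

section
/- For 0 < |q| < 1 and |t| < 1, Σ_{n≥0} t^n/(q;q)_n = 1/(t;q)_∞, where (t;q)_n = Π_{j=0}^{n-1}(1-q^j t) and (t;q)_∞ = Π_{j=0}^∞ (1-q^j t). -/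
open Finset Filter Topology

namespace QExpAux

/-- The q-Pochhammer denominator `(q;q)_n`. -/
noncomputable def d (q : ℝ) (n : ℕ) : ℝ := ∏ j ∈ Finset.Icc 1 n, (1 - q ^ j)

lemma one_sub_pow_ge {q : ℝ} (hq1 : |q| < 1) {j : ℕ} (hj : 1 ≤ j) :
    1 - |q| ≤ 1 - q ^ j := by
  have h1 : q ^ j ≤ |q ^ j| := le_abs_self _
  have h2 : |q ^ j| ≤ |q| := by
    rw [abs_pow]
    calc |q| ^ j ≤ |q| ^ 1 := pow_le_pow_of_le_one (abs_nonneg q) hq1.le hj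
    _ = |q| := pow_one _
  linarith

lemma d_pos {q : ℝ} (hq1 : |q| < 1) (n : ℕ) : 0 < d q n := by
  apply Finset.prod_pos
  intro j hj
  have := one_sub_pow_ge hq1 (Finset.mem_Icc.mp hj).1
  linarith

lemma d_succ (q : ℝ) (n : ℕ) : d q (n + 1) = d q n * (1 - q ^ (n + 1)) :=
  Finset.prod_Icc_succ_top (Nat.succ_le_succ (Nat.zero_le n)) _

lemma summable_aux {q : ℝ} (hq1 : |q| < 1) {s : ℝ} (hs : |s| < 1) :
    Summable (fun n : ℕ => s ^ n / d q n) := by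
  rcases eq_or_ne s 0 with rfl | hs0
  · apply summable_of_ne_finset_zero (s := {0})
    intro n hn
    simp only [Finset.mem_singleton] at hn
    simp [zero_pow hn]
  · apply summable_of_ratio_test_tendsto_lt_one (l := |s|) hs
    · filter_upwards with n
      exact div_ne_zero (pow_ne_zero _ hs0) (d_pos hq1 n).ne'
    · have hq0 : Tendsto (fun n : ℕ => q ^ (n + 1)) atTop (𝓝 0) := by
        have := (tendsto_pow_atTop_nhds_zero_of_abs_lt_one hq1).const_mul q
        simpa [pow_succ, mul_comm] using this
      have hlim : Tendsto (fun n : ℕ => |s| / (1 - q ^ (n + 1))) atTop (𝓝 (|s| / (1 - 0))) := by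
        exact tendsto_const_nhds.div (tendsto_const_nhds.sub hq0) (by norm_num)
      rw [show |s| / (1 - (0:ℝ)) = |s| by norm_num] at hlim
      refine hlim.congr fun n => ?_
      have hdn := d_pos hq1 n
      have hdn1 := d_pos hq1 (n + 1)
      have h1 : (0:ℝ) < 1 - q ^ (n + 1) := by
        have := one_sub_pow_ge hq1 (Nat.le_add_left 1 n); linarith
      rw [Real.norm_eq_abs, Real.norm_eq_abs, abs_div, abs_div, abs_pow, abs_pow,
        abs_of_pos hdn, abs_of_pos hdn1, d_succ, pow_succ]
      rw [pow_succ] at h1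
      have hsn : |s| ^ n ≠ 0 := pow_ne_zero _ (abs_ne_zero.mpr hs0)
      field_simp
      ring

lemma feq {q : ℝ} (hq1 : |q| < 1) {s : ℝ} (hs : |s| < 1) :
    (1 - s) * (∑' n : ℕ, s ^ n / d q n) = ∑' n : ℕ, (q * s) ^ n / d q n := by
  have hqs : |q * s| < 1 := by
    rw [abs_mul]
    calc |q| * |s| ≤ 1 * |s| := by
          apply mul_le_mul_of_nonneg_right hq1.le (abs_nonneg s)
    _ = |s| := one_mul _
    _ < 1 := hs
  have h1 := summable_aux hq1 hs
  have h2 := summable_aux hq1 hqs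
  have h3 : Summable (fun n : ℕ => (1 - q ^ n) * s ^ n / d q n) := by
    apply (h1.sub h2).congr
    intro n
    rw [mul_pow]; ring
  have key : (∑' n : ℕ, s ^ n / d q n) - (∑' n : ℕ, (q * s) ^ n / d q n)
      = s * ∑' n : ℕ, s ^ n / d q n := by
    rw [← Summable.tsum_sub h1 h2]
    have e1 : ∀ n : ℕ, s ^ n / d q n - (q * s) ^ n / d q n
        = (1 - q ^ n) * s ^ n / d q n := by
      intro n; rw [mul_pow]; ring
    rw [tsum_congr e1, Summable.tsum_eq_zero_add h3]
    have e0 : (1 - q ^ 0) * s ^ 0 / d q 0 = 0 := by simp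
    rw [e0, zero_add]
    rw [← tsum_mul_left]
    apply tsum_congr
    intro n
    have h1q : (0:ℝ) < 1 - q ^ (n + 1) := by
      have := one_sub_pow_ge hq1 (Nat.le_add_left 1 n); linarith
    have hdn := d_pos hq1 n
    rw [d_succ, pow_succ]
    rw [pow_succ] at h1q
    field_simp
    ring
  linarith

lemma prodF {q t : ℝ} (hq1 : |q| < 1) (ht : |t| < 1) (N : ℕ) :
    (∏ j ∈ Finset.range N, (1 - q ^ j * t)) * (∑' n : ℕ, t ^ n / d q n)
      = ∑' n : ℕ, (q ^ N * t) ^ n / d q n := by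
  induction N with
  | zero => simp
  | succ N ih =>
    have habs : |q ^ N * t| < 1 := by
      rw [abs_mul, abs_pow]
      calc |q| ^ N * |t| ≤ 1 * |t| := by
            apply mul_le_mul_of_nonneg_right (pow_le_one₀ (abs_nonneg q) hq1.le) (abs_nonneg t)
      _ = |t| := one_mul _
      _ < 1 := ht
    rw [Finset.prod_range_succ, mul_comm (∏ j ∈ Finset.range N, (1 - q ^ j * t)) (1 - q ^ N * t),
      mul_assoc, ih, feq hq1 habs]
    apply tsum_congr
    intro n
    congr 1
    rw [pow_succ]
    ring

lemma abs_log_one_sub_le {t u : ℝ} (ht : |t| < 1) (hu : |u| ≤ |t|) :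
    |Real.log (1 - u)| ≤ |u| / (1 - |t|) := by
  have hu1 : u < 1 := lt_of_le_of_lt (le_abs_self u) (lt_of_le_of_lt hu ht)
  have h1 : (0:ℝ) < 1 - u := by linarith
  have hc : (0:ℝ) < 1 - |t| := by linarith
  have hD : 1 - |t| ≤ 1 - u := by
    have := le_abs_self u
    linarith [le_trans this hu]
  have hub : Real.log (1 - u) ≤ -u := by
    have := Real.log_le_sub_one_of_pos h1; linarith
  have hlb : -Real.log (1 - u) ≤ u / (1 - u) := by
    have h2 := Real.log_le_sub_one_of_pos (inv_pos.mpr h1)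
    rw [Real.log_inv] at h2
    have e : (1 - u)⁻¹ - 1 = u / (1 - u) := by field_simp; ring
    linarith [e ▸ h2]
  rw [abs_le]
  constructor
  · -- -(|u|/(1-|t|)) ≤ log (1-u), i.e. -log(1-u) ≤ |u|/(1-|t|)
    have h3 : u / (1 - u) ≤ |u| / (1 - |t|) := by
      rw [div_le_div_iff₀ h1 hc]
      nlinarith [le_abs_self u, abs_nonneg u]
    linarith
  · have h4 : |u| ≤ |u| / (1 - |t|) := by
      rw [le_div_iff₀ hc]
      nlinarith [abs_nonneg u]
    linarith [le_abs_self (-u), abs_neg u, neg_abs_le u]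

lemma multipliable_aux {q t : ℝ} (hq1 : |q| < 1) (ht : |t| < 1) :
    Multipliable (fun j : ℕ => 1 - q ^ j * t) := by
  have habs : ∀ j : ℕ, |q ^ j * t| ≤ |t| := by
    intro j
    rw [abs_mul, abs_pow]
    calc |q| ^ j * |t| ≤ 1 * |t| := by
          apply mul_le_mul_of_nonneg_right (pow_le_one₀ (abs_nonneg q) hq1.le) (abs_nonneg t)
    _ = |t| := one_mul _
  have hpos : ∀ (_ : Unit) (j : ℕ), 0 < 1 - q ^ j * t := by
    intro _ j
    have h1 := habs j
    have := le_abs_self (q ^ j * t)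
    linarith
  have hlog : ∀ (_ : Unit), Summable fun j : ℕ => Real.log (1 - q ^ j * t) := by
    intro _
    apply Summable.of_norm_bounded (g := fun j : ℕ => |q| ^ j * (|t| / (1 - |t|)))
    · exact (summable_geometric_of_lt_one (abs_nonneg q) hq1).mul_right _
    · intro j
      rw [Real.norm_eq_abs]
      calc |Real.log (1 - q ^ j * t)| ≤ |q ^ j * t| / (1 - |t|) :=
            abs_log_one_sub_le ht (habs j)
      _ = |q| ^ j * (|t| / (1 - |t|)) := by
            rw [abs_mul, abs_pow]; ring
  exact Real.multipliable_of_summable_log (hpos ()) (hlog ())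

lemma summable_M {q t : ℝ} (hq1 : |q| < 1) (ht : |t| < 1) :
    Summable (fun n : ℕ => |t| ^ n / d q (n + 1)) := by
  have habs : |(|t|)| < 1 := by rwa [abs_abs]
  have hbase := (summable_aux hq1 habs).mul_left (1 / (1 - |q|))
  apply Summable.of_nonneg_of_le
    (fun n => div_nonneg (pow_nonneg (abs_nonneg t) n) (d_pos hq1 (n + 1)).le)
    (fun n => ?_) hbase
  have hdn := d_pos hq1 n
  have h1 : d q n * (1 - |q|) ≤ d q (n + 1) := by
    rw [d_succ]
    have := one_sub_pow_ge hq1 (Nat.le_add_left 1 n)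
    nlinarith
  have hq' : (0:ℝ) < 1 - |q| := by linarith
  have hd1 := d_pos hq1 (n + 1)
  calc |t| ^ n / d q (n + 1) ≤ |t| ^ n / (d q n * (1 - |q|)) := by
        rw [div_le_div_iff₀ hd1 (by positivity : (0:ℝ) < d q n * (1 - |q|))]
        exact mul_le_mul_of_nonneg_left h1 (pow_nonneg (abs_nonneg t) n)
  _ = 1 / (1 - |q|) * (|t| ^ n / d q n) := by
        rw [div_mul_eq_div_div_swap, div_div, one_div, ← div_eq_inv_mul, div_div,
          mul_comm (1 - |q|) (d q n), ← div_div, div_div]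

lemma F_sub_one_bound {q t : ℝ} (hq1 : |q| < 1) (ht : |t| < 1) {s : ℝ}
    (hs : |s| ≤ |t|) :
    |(∑' n : ℕ, s ^ n / d q n) - 1| ≤ |s| * ∑' n : ℕ, |t| ^ n / d q (n + 1) := by
  have hs1 : |s| < 1 := lt_of_le_of_lt hs ht
  have h1 := summable_aux hq1 hs1
  have h2 : Summable (fun n : ℕ => s ^ (n + 1) / d q (n + 1)) := by
    have := h1.comp_injective Nat.succ_injective
    exact this.congr fun n => rfl
  have e1 : (∑' n : ℕ, s ^ n / d q n) - 1 = ∑' n : ℕ, s ^ (n + 1) / d q (n + 1) := by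
    rw [Summable.tsum_eq_zero_add h1]
    simp [d]
  rw [e1]
  have h2abs : Summable (fun n : ℕ => ‖s ^ (n + 1) / d q (n + 1)‖) := h2.abs.congr
    (fun n => (Real.norm_eq_abs _).symm)
  calc |∑' n : ℕ, s ^ (n + 1) / d q (n + 1)|
      ≤ ∑' n : ℕ, ‖s ^ (n + 1) / d q (n + 1)‖ := by
        rw [← Real.norm_eq_abs]
        exact norm_tsum_le_tsum_norm h2abs
  _ ≤ ∑' n : ℕ, |s| * (|t| ^ n / d q (n + 1)) := by
        apply Summable.tsum_le_tsum _ h2abs ((summable_M hq1 ht).mul_left _)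
        intro n
        have hdn1 := d_pos hq1 (n + 1)
        rw [Real.norm_eq_abs, abs_div, abs_of_pos hdn1, abs_pow, pow_succ]
        rw [mul_comm (|s| ^ n) |s|, mul_div_assoc]
        apply mul_le_mul_of_nonneg_left _ (abs_nonneg s)
        gcongr
  _ = |s| * ∑' n : ℕ, |t| ^ n / d q (n + 1) := tsum_mul_left

lemma tendsto_F_one {q t : ℝ} (hq1 : |q| < 1) (ht : |t| < 1) :
    Tendsto (fun N : ℕ => ∑' n : ℕ, (q ^ N * t) ^ n / d q n) atTop (𝓝 1) := by
  set M := ∑' n : ℕ, |t| ^ n / d q (n + 1) with hM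
  have hbound : ∀ N : ℕ, |(∑' n : ℕ, (q ^ N * t) ^ n / d q n) - 1|
      ≤ |q| ^ N * (|t| * M) := by
    intro N
    have hs : |q ^ N * t| ≤ |t| := by
      rw [abs_mul, abs_pow]
      calc |q| ^ N * |t| ≤ 1 * |t| :=
            mul_le_mul_of_nonneg_right (pow_le_one₀ (abs_nonneg q) hq1.le) (abs_nonneg t)
      _ = |t| := one_mul _
    calc |(∑' n : ℕ, (q ^ N * t) ^ n / d q n) - 1| ≤ |q ^ N * t| * M :=
          F_sub_one_bound hq1 ht hs
    _ = |q| ^ N * (|t| * M) := by rw [abs_mul, abs_pow, mul_assoc]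
  have hzero : Tendsto (fun N : ℕ => |(∑' n : ℕ, (q ^ N * t) ^ n / d q n) - 1|)
      atTop (𝓝 0) := by
    apply squeeze_zero (fun N => abs_nonneg _) hbound
    have := (tendsto_pow_atTop_nhds_zero_of_abs_lt_one (by rwa [abs_abs] : |(|q|)| < 1)).mul_const
      (|t| * M)
    simpa using this
  have h0 : Tendsto (fun N : ℕ => (∑' n : ℕ, (q ^ N * t) ^ n / d q n) - 1)
      atTop (𝓝 0) := by
    rwa [tendsto_zero_iff_abs_tendsto_zero]
  have h0' : Tendsto (fun N : ℕ => ((∑' n : ℕ, (q ^ N * t) ^ n / d q n) - 1) + 1)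
      atTop (𝓝 (0 + 1)) := h0.add tendsto_const_nhds
  simpa using h0'

end QExpAux

open QExpAux in
/-- For `0 < |q| < 1` and `|t| < 1`: `Σ_{n≥0} tⁿ/(q;q)_n = 1/(t;q)_∞`. -/
theorem q_exp_eulerian {q t : ℝ} (hq0 : 0 < |q|) (hq1 : |q| < 1) (ht : |t| < 1) :
    ∑' n : ℕ, t ^ n / ∏ j ∈ Finset.Icc 1 n, (1 - q ^ j) =
      (∏' j : ℕ, (1 - q ^ j * t))⁻¹ := by
  have hmul := multipliable_aux hq1 ht
  have hprod : Tendsto (fun N : ℕ => ∏ j ∈ Finset.range N, (1 - q ^ j * t)) atTop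
      (𝓝 (∏' j : ℕ, (1 - q ^ j * t))) := hmul.hasProd.tendsto_prod_nat
  have h1 : Tendsto (fun N : ℕ => (∏ j ∈ Finset.range N, (1 - q ^ j * t))
      * (∑' n : ℕ, t ^ n / d q n)) atTop
      (𝓝 ((∏' j : ℕ, (1 - q ^ j * t)) * (∑' n : ℕ, t ^ n / d q n))) :=
    hprod.mul_const _
  have h2 : Tendsto (fun N : ℕ => (∏ j ∈ Finset.range N, (1 - q ^ j * t))
      * (∑' n : ℕ, t ^ n / d q n)) atTop (𝓝 1) := by
    have := tendsto_F_one hq1 ht (q := q)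
    exact this.congr fun N => (prodF hq1 ht N).symm
  have hkey : (∏' j : ℕ, (1 - q ^ j * t)) * (∑' n : ℕ, t ^ n / d q n) = 1 :=
    tendsto_nhds_unique h1 h2
  have hkey' : (∑' n : ℕ, t ^ n / d q n) * (∏' j : ℕ, (1 - q ^ j * t)) = 1 := by
    rw [mul_comm]; exact hkey
  have := eq_inv_of_mul_eq_one_left hkey'
  simpa [d] using this
end

section
/- The moments of Fibonacci polynomials are Catalan numbers: if Λ_F is the linear functional on polynomials determined by Λ_F(F_{n+1}(x,-1)) = [n=0], then Λ_F(x^{2n}) = C_n = (1/(n+1)) C(2n,n) and Λ_F(x^{2n+1}) = 0. -/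
open Finset Polynomial

/-- The Fibonacci polynomials `F_n(x,-1)`:
`F_0 = 0`, `F_1 = 1`, `F_{n+2} = x F_{n+1} - F_{n}`. -/
noncomputable def fibPoly : ℕ → Polynomial ℝ
  | 0 => 0
  | 1 => 1
  | (n + 2) => Polynomial.X * fibPoly (n + 1) - fibPoly n

lemma fibPoly_mul (k : ℕ) :
    Polynomial.X * fibPoly (k + 1) = fibPoly (k + 2) + fibPoly k := by
  cases k with
  | zero => simp [fibPoly]
  | succ m =>
      have : fibPoly (m + 3) = Polynomial.X * fibPoly (m + 2) - fibPoly (m + 1) := rfl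
      rw [show m + 1 + 2 = m + 3 from rfl, this]
      ring

/-- Ballot-type coefficients `C(n,j) - C(n,j-1)`. -/
noncomputable def cc (n j : ℕ) : ℝ :=
  if j = 0 then 1 else (n.choose j : ℝ) - (n.choose (j - 1) : ℝ)

/-- The (real-valued) Catalan triangle. -/
noncomputable def G (n k : ℕ) : ℝ :=
  if (n + k) % 2 = 0 ∧ k ≤ n then cc n ((n - k) / 2) else 0

lemma cc_pascal (n : ℕ) {j : ℕ} (hj : j ≠ 0) :
    cc (n + 1) j = cc n j + cc n (j - 1) := by
  obtain ⟨i, rfl⟩ := Nat.exists_eq_succ_of_ne_zero hj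
  cases i with
  | zero => simp [cc, Nat.choose_one_right]
  | succ m =>
      simp only [cc, Nat.succ_ne_zero, if_false, Nat.succ_sub_one]
      rw [Nat.choose_succ_succ n (m + 1), Nat.choose_succ_succ n m]
      push_cast
      ring

lemma cc_half (j : ℕ) : cc (2 * j + 1) (j + 1) = 0 := by
  simp [cc, Nat.choose_symm_half]

lemma G_rec (n k : ℕ) :
    G (n + 1) k = G n (k + 1) + (if k = 0 then (0 : ℝ) else G n (k - 1)) := by
  by_cases h1 : (n + 1 + k) % 2 = 0
  · by_cases h2 : k ≤ n + 1
    · -- parity opposite between n and k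
      have hLHS : G (n + 1) k = cc (n + 1) ((n + 1 - k) / 2) := by
        simp [G, h1, h2]
      rcases eq_or_lt_of_le h2 with hk | hk
      · -- k = n + 1
        have e1 : ¬ (k + 1 ≤ n) := by omega
        have hksub : (k - 1 : ℕ) ≤ n := by omega
        have hk0 : k ≠ 0 := by omega
        have hp : (n + (k - 1)) % 2 = 0 := by omega
        simp [hLHS, G, h1, h2, e1, hk0, hp, hksub, show (n + 1 - k) / 2 = 0 by omega,
          show (n - (k - 1)) / 2 = 0 by omega, cc]
      · -- k ≤ n ; in fact k ≤ n - 1 because of parity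
        have hkn : k + 1 ≤ n := by omega
        set j := (n + 1 - k) / 2 with hjdef
        have hj0 : j ≠ 0 := by
          simp only [hjdef]; omega
        have hA : (n - (k + 1)) / 2 = j - 1 := by omega
        have hB : k ≠ 0 → (n - (k - 1)) / 2 = j := by omega
        have hpA : (n + (k + 1)) % 2 = 0 := by omega
        rw [hLHS, cc_pascal n hj0]
        by_cases hk0 : k = 0
        · subst hk0
          have hn : n = 2 * (j - 1) + 1 := by omega
          have : cc n j = 0 := by
            rw [hn, show j = (j - 1) + 1 by omega]
            exact cc_half (j - 1)
          simp [G, hpA, hkn, hA, this]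
        · have hpB : (n + (k - 1)) % 2 = 0 := by omega
          have hkB : k - 1 ≤ n := by omega
          simp [G, hpA, hkn, hA, hk0, hpB, hkB, hB hk0]
          ring
    · -- k > n + 1 : everything is 0
      have e1 : ¬ (k + 1 ≤ n) := by omega
      have e2 : ¬ (k - 1 ≤ n) := by omega
      have e3 : ¬ (k ≤ n + 1) := h2
      simp [G, e1, e2, e3]
  · -- parity mismatch : everything is 0
    have e1 : ¬ ((n + (k + 1)) % 2 = 0) := by omega
    rcases eq_or_ne k 0 with rfl | hk0
    · simp [G, h1, e1]
    · have e2 : ¬ ((n + (k - 1)) % 2 = 0) := by omega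
      simp [G, h1, e1, e2, hk0]

lemma moments_aux (Λ : Polynomial ℝ →ₗ[ℝ] ℝ)
    (h : ∀ n : ℕ, Λ (fibPoly (n + 1)) = if n = 0 then 1 else 0) :
    ∀ n k : ℕ, Λ (Polynomial.X ^ n * fibPoly (k + 1)) = G n k := by
  intro n
  induction n with
  | zero =>
      intro k
      rw [pow_zero, one_mul, h k]
      by_cases hk : k = 0
      · subst hk; simp [G, cc]
      · simp [G, hk, fun hc : k ≤ 0 => hk (Nat.le_zero.mp hc)]
  | succ n ih =>
      intro k
      have key : Polynomial.X ^ (n + 1) * fibPoly (k + 1)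
          = Polynomial.X ^ n * fibPoly (k + 2) + Polynomial.X ^ n * fibPoly k := by
        rw [pow_succ, mul_assoc, fibPoly_mul]
        ring
      rw [key, map_add, ih (k + 1), G_rec]
      congr 1
      by_cases hk : k = 0
      · subst hk
        simp [fibPoly]
      · obtain ⟨m, rfl⟩ := Nat.exists_eq_succ_of_ne_zero hk
        simpa using ih m

lemma cc_catalan (n : ℕ) : cc (2 * n) n = (catalan n : ℝ) := by
  cases n with
  | zero => simp [cc]
  | succ m =>
      have hcat : ((m + 2 : ℕ) : ℝ) * (catalan (m + 1) : ℝ)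
          = ((2 * (m + 1)).choose (m + 1) : ℝ) := by
        have := succ_mul_catalan_eq_centralBinom (m + 1)
        rw [Nat.centralBinom_eq_two_mul_choose] at this
        exact_mod_cast congrArg (Nat.cast : ℕ → ℝ) this
      have hch : ((2 * (m + 1)).choose (m + 1) : ℝ) * ((m + 1 : ℕ) : ℝ)
          = ((2 * (m + 1)).choose m : ℝ) * ((m + 2 : ℕ) : ℝ) := by
        have := Nat.choose_succ_right_eq (2 * (m + 1)) m
        have h2 : 2 * (m + 1) - m = m + 2 := by omega
        rw [h2] at this
        exact_mod_cast congrArg (Nat.cast : ℕ → ℝ) this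
      have hne : ((m + 2 : ℕ) : ℝ) ≠ 0 := by positivity
      simp only [cc, Nat.succ_ne_zero, if_false, Nat.succ_sub_one]
      push_cast at hcat hch ⊢
      have hne' : ((m : ℝ) + 2) ≠ 0 := by positivity
      apply mul_left_cancel₀ hne'
      nlinarith [hcat, hch]

/-- The moments of the Fibonacci polynomials are the Catalan numbers:
if `Λ(F_{n+1}(x,-1)) = [n=0]` then `Λ(x^{2n}) = C_n = C(2n,n)/(n+1)` and
`Λ(x^{2n+1}) = 0`. -/
theorem fibonacci_moments (Λ : Polynomial ℝ →ₗ[ℝ] ℝ)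
    (h : ∀ n : ℕ, Λ (fibPoly (n + 1)) = if n = 0 then 1 else 0) (n : ℕ) :
    Λ (Polynomial.X ^ (2 * n)) = catalan n ∧
    Λ (Polynomial.X ^ (2 * n)) = ((2 * n).choose n : ℝ) / (n + 1) ∧
    Λ (Polynomial.X ^ (2 * n + 1)) = 0 := by
  have h1 : fibPoly 1 = 1 := rfl
  have heven : Λ (Polynomial.X ^ (2 * n)) = (catalan n : ℝ) := by
    have := moments_aux Λ h (2 * n) 0
    rw [h1, mul_one] at this
    rw [this]
    have : G (2 * n) 0 = cc (2 * n) n := by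
      rw [G, if_pos ⟨by omega, by omega⟩, show (2 * n - 0) / 2 = n by omega]
    rw [this, cc_catalan]
  refine ⟨heven, ?_, ?_⟩
  · rw [heven]
    have := succ_mul_catalan_eq_centralBinom n
    rw [Nat.centralBinom_eq_two_mul_choose] at this
    have hr : ((n + 1 : ℕ) : ℝ) * (catalan n : ℝ) = ((2 * n).choose n : ℝ) :=
      by exact_mod_cast congrArg (Nat.cast : ℕ → ℝ) this
    have hne : ((n : ℝ) + 1) ≠ 0 := by positivity
    field_simp
    push_cast at hr
    linarith [hr]
  · have := moments_aux Λ h (2 * n + 1) 0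
    rw [h1, mul_one] at this
    rw [this]
    have hp : ¬ ((2 * n + 1 + 0) % 2 = 0) := by omega
    simp [G, hp]
end
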